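/- arXiv:1604.03908 — 4 statements merged into one kernel-verified Lean document; each statement's English description precedes it below -/
import Mathlib

section
/- Let n ≥ 2 be an integer and let G be the abelian group with presentation ⟨a, d, A | A^2 = a^{-2n}, A^{(n-1)^2} = 1, d^2 = A^{n+1}⟩ (in the category of abelian groups). If n is odd, then G ≅ Z/2Z × Z/2Z × Z/(n(n-1)^2)Z. If n is even, then G ≅ Z/2Z × Z/(2n(n-1)^2)Z. -/
/-- Let `n ≥ 2` and let `G` be the abelian group with presentation
`⟨a, d, A | A² = a^{-2n}, A^{(n-1)²} = 1, d² = A^{n+1}⟩` (in the category of abelian groups),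
i.e. the quotient of `ℤ³` (with coordinates corresponding to `a, d, A`) by the subgroup
generated by the relation vectors `(2n, 0, 2)`, `(0, 0, (n-1)²)` and `(0, 2, -(n+1))`.
If `n` is odd then `G ≅ ℤ/2 × ℤ/2 × ℤ/(n(n-1)²)`, and if `n` is even then
`G ≅ ℤ/2 × ℤ/(2n(n-1)²)`. -/
theorem statement10 (n : ℕ) (hn : 2 ≤ n)
    (S : AddSubgroup (ℤ × ℤ × ℤ))
    (hS : S = AddSubgroup.closure
      {((2 * n : ℤ), (0 : ℤ), (2 : ℤ)), ((0 : ℤ), (0 : ℤ), ((n : ℤ) - 1) ^ 2),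
        ((0 : ℤ), (2 : ℤ), -((n : ℤ) + 1))}) :
    (Odd n → Nonempty ((ℤ × ℤ × ℤ) ⧸ S ≃+ ZMod 2 × ZMod 2 × ZMod (n * (n - 1) ^ 2))) ∧
    (Even n → Nonempty ((ℤ × ℤ × ℤ) ⧸ S ≃+ ZMod 2 × ZMod (2 * n * (n - 1) ^ 2))) := by
  constructor
  · intro hodd
    obtain ⟨k, hk⟩ := hodd
    set m : ℕ := n * (n - 1) ^ 2 with hm
    haveI : NeZero m := ⟨by
      have : 1 ≤ n - 1 := by omega
      have : 1 ≤ (n-1)^2 := Nat.one_le_pow _ _ (by omega)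
      simp only [hm]; positivity⟩
    have hmz : (m : ℤ) = (n : ℤ) * ((n : ℤ) - 1) ^ 2 := by
      have h1 : (1 : ℕ) ≤ n := by omega
      push_cast [hm, Nat.cast_sub h1]
      ring
    have hnz : (n : ℤ) = 2 * k + 1 := by exact_mod_cast congrArg (Nat.cast : ℕ → ℤ) hk
    set c : ℤ := (2 * (k : ℤ) + 1) * ((k : ℤ) + 1) with hc
    set f : ℤ × ℤ × ℤ → ZMod 2 × ZMod 2 × ZMod m :=
      fun x => ((x.2.1 : ZMod 2), (x.2.2 : ZMod 2),
        ((x.1 - (n : ℤ) * x.2.2 - c * x.2.1 : ℤ) : ZMod m)) with hf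
    have hadd : ∀ x y, f (x + y) = f x + f y := by
      intro x y
      simp only [hf, Prod.fst_add, Prod.snd_add, Prod.mk_add_mk]
      refine Prod.ext ?_ (Prod.ext ?_ ?_) <;> push_cast <;> ring
    set φ : (ℤ × ℤ × ℤ) →+ ZMod 2 × ZMod 2 × ZMod m := AddMonoidHom.mk' f hadd with hφ
    have hsurj : Function.Surjective φ := by
      rintro ⟨u, v, w⟩
      obtain ⟨a, ha⟩ := ZMod.intCast_surjective u
      obtain ⟨b, hb⟩ := ZMod.intCast_surjective v
      obtain ⟨w', hw⟩ := ZMod.intCast_surjective w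
      refine ⟨(w' + (n : ℤ) * b + c * a, a, b), ?_⟩
      simp only [hφ, AddMonoidHom.mk'_apply, hf]
      refine Prod.ext ha (Prod.ext hb ?_)
      rw [show w' + (n:ℤ) * b + c * a - (n:ℤ) * b - c * a = w' by ring, hw]
    have dv2 : ∀ e : ℤ, (2 : ℤ) ∣ e → ((e : ZMod 2) = 0) := fun e h =>
      (ZMod.intCast_zmod_eq_zero_iff_dvd e 2).2 (by exact_mod_cast h)
    have dvm : ∀ e : ℤ, (m : ℤ) ∣ e → ((e : ZMod m) = 0) := fun e h =>
      (ZMod.intCast_zmod_eq_zero_iff_dvd e m).2 h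
    have hker : S = φ.ker := by
      rw [hS]
      apply le_antisymm
      · rw [AddSubgroup.closure_le]
        rintro x hx
        simp only [Set.mem_insert_iff, Set.mem_singleton_iff] at hx
        rcases hx with rfl | rfl | rfl <;>
          simp only [SetLike.mem_coe, AddMonoidHom.mem_ker, hφ, AddMonoidHom.mk'_apply, hf] <;>
          refine Prod.ext (dv2 _ ?_) (Prod.ext (dv2 _ ?_) (dvm _ ?_))
        · exact ⟨0, by ring⟩
        · exact ⟨1, by ring⟩
        · exact ⟨0, by rw [hmz]; ring⟩
        · exact ⟨0, by ring⟩
        · exact ⟨2 * k ^ 2, by rw [hnz]; ring⟩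
        · exact ⟨-1, by rw [hmz]; ring⟩
        · exact ⟨1, by ring⟩
        · exact ⟨-(k + 1), by rw [hnz]; ring⟩
        · exact ⟨0, by rw [hmz, hnz, hc]; ring⟩
      · rintro ⟨x1, x2, x3⟩ hx
        simp only [AddMonoidHom.mem_ker, hφ, AddMonoidHom.mk'_apply, hf, Prod.mk.injEq,
          Prod.mk_eq_zero] at hx
        obtain ⟨h2, h3, h1⟩ :
            (x2 : ZMod 2) = 0 ∧ (x3 : ZMod 2) = 0 ∧
              ((x1 - (n:ℤ) * x3 - c * x2 : ℤ) : ZMod m) = 0 := by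
          refine ⟨?_, ?_, ?_⟩ <;> simp [Prod.ext_iff] at hx <;> push_cast <;> tauto
        obtain ⟨s, hs⟩ := (ZMod.intCast_zmod_eq_zero_iff_dvd _ _).1 h2
        obtain ⟨t, ht⟩ := (ZMod.intCast_zmod_eq_zero_iff_dvd _ _).1 h3
        obtain ⟨u, hu⟩ := (ZMod.intCast_zmod_eq_zero_iff_dvd _ _).1 h1
        have hg1 : ((2 * n : ℤ), (0 : ℤ), (2 : ℤ)) ∈
            AddSubgroup.closure {((2 * n : ℤ), (0 : ℤ), (2 : ℤ)),
              ((0 : ℤ), (0 : ℤ), ((n : ℤ) - 1) ^ 2), ((0 : ℤ), (2 : ℤ), -((n : ℤ) + 1))} :=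
          AddSubgroup.subset_closure (by simp)
        have hg2 : ((0 : ℤ), (0 : ℤ), ((n : ℤ) - 1) ^ 2) ∈
            AddSubgroup.closure {((2 * n : ℤ), (0 : ℤ), (2 : ℤ)),
              ((0 : ℤ), (0 : ℤ), ((n : ℤ) - 1) ^ 2), ((0 : ℤ), (2 : ℤ), -((n : ℤ) + 1))} :=
          AddSubgroup.subset_closure (by simp)
        have hg3 : ((0 : ℤ), (2 : ℤ), -((n : ℤ) + 1)) ∈
            AddSubgroup.closure {((2 * n : ℤ), (0 : ℤ), (2 : ℤ)),
              ((0 : ℤ), (0 : ℤ), ((n : ℤ) - 1) ^ 2), ((0 : ℤ), (2 : ℤ), -((n : ℤ) + 1))} :=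
          AddSubgroup.subset_closure (by simp)
        have key : (x1, x2, x3) =
            (2 * (k:ℤ)^2 * u + t + ((k:ℤ) + 1) * s) • ((2 * n : ℤ), (0 : ℤ), (2 : ℤ)) +
            (-u) • ((0 : ℤ), (0 : ℤ), ((n : ℤ) - 1) ^ 2) +
            s • ((0 : ℤ), (2 : ℤ), -((n : ℤ) + 1)) := by
          simp only [Prod.smul_mk, smul_eq_mul, Prod.mk_add_mk, Prod.mk.injEq]
          refine ⟨?_, ?_, ?_⟩
          · have : x1 = (m:ℤ) * u + (n:ℤ) * x3 + c * x2 := by linarith [hu]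
            rw [this, hmz, hnz, hc, hs, ht]; ring
          · rw [hs]; ring
          · rw [ht, hnz]; ring
        rw [key]
        exact AddSubgroup.add_mem _ (AddSubgroup.add_mem _ (AddSubgroup.zsmul_mem _ hg1 _)
          (AddSubgroup.zsmul_mem _ hg2 _)) (AddSubgroup.zsmul_mem _ hg3 _)
    exact ⟨(QuotientAddGroup.quotientAddEquivOfEq hker).trans
      (QuotientAddGroup.quotientKerEquivOfSurjective φ hsurj)⟩
  · intro heven
    obtain ⟨k, hk⟩ := heven
    set m : ℕ := 2 * n * (n - 1) ^ 2 with hm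
    haveI : NeZero m := ⟨by
      have : 1 ≤ (n-1)^2 := Nat.one_le_pow _ _ (by omega)
      simp only [hm]; positivity⟩
    have hmz : (m : ℤ) = 2 * (n : ℤ) * ((n : ℤ) - 1) ^ 2 := by
      have h1 : (1 : ℕ) ≤ n := by omega
      push_cast [hm, Nat.cast_sub h1]
      ring
    have hnz : (n : ℤ) = 2 * k := by
      have : n = 2 * k := by omega
      exact_mod_cast congrArg (Nat.cast : ℕ → ℤ) this
    set e : ℤ := 8 * (k:ℤ)^2 * ((k:ℤ) - 1) with he
    set c : ℤ := 4 * (k:ℤ)^2 * ((k:ℤ) - 1) * (2 * (k:ℤ) + 1) with hc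
    set f : ℤ × ℤ × ℤ → ZMod 2 × ZMod m :=
      fun x => ((x.2.1 : ZMod 2),
        ((x.1 + e * x.2.2 + c * x.2.1 : ℤ) : ZMod m)) with hf
    have hadd : ∀ x y, f (x + y) = f x + f y := by
      intro x y
      simp only [hf, Prod.fst_add, Prod.snd_add, Prod.mk_add_mk]
      refine Prod.ext ?_ ?_ <;> push_cast <;> ring
    set φ : (ℤ × ℤ × ℤ) →+ ZMod 2 × ZMod m := AddMonoidHom.mk' f hadd with hφ
    have hsurj : Function.Surjective φ := by
      rintro ⟨u, w⟩
      obtain ⟨a, ha⟩ := ZMod.intCast_surjective u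
      obtain ⟨w', hw⟩ := ZMod.intCast_surjective w
      refine ⟨(w' - c * a, a, 0), ?_⟩
      simp only [hφ, AddMonoidHom.mk'_apply, hf]
      refine Prod.ext ha ?_
      rw [show w' - c * a + e * 0 + c * a = w' by ring, hw]
    have dv2 : ∀ x : ℤ, (2 : ℤ) ∣ x → ((x : ZMod 2) = 0) := fun x h =>
      (ZMod.intCast_zmod_eq_zero_iff_dvd x 2).2 (by exact_mod_cast h)
    have dvm : ∀ x : ℤ, (m : ℤ) ∣ x → ((x : ZMod m) = 0) := fun x h =>
      (ZMod.intCast_zmod_eq_zero_iff_dvd x m).2 h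
    have hker : S = φ.ker := by
      rw [hS]
      apply le_antisymm
      · rw [AddSubgroup.closure_le]
        rintro x hx
        simp only [Set.mem_insert_iff, Set.mem_singleton_iff] at hx
        rcases hx with rfl | rfl | rfl <;>
          simp only [SetLike.mem_coe, AddMonoidHom.mem_ker, hφ, AddMonoidHom.mk'_apply, hf] <;>
          refine Prod.ext (dv2 _ ?_) (dvm _ ?_)
        · exact ⟨0, by ring⟩
        · exact ⟨1, by rw [hmz, hnz, he]; ring⟩
        · exact ⟨0, by ring⟩
        · exact ⟨2 * k * ((k:ℤ) - 1), by rw [hmz, hnz, he]; ring⟩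
        · exact ⟨1, by ring⟩
        · exact ⟨0, by rw [hmz, hnz, he, hc]; ring⟩
      · rintro ⟨x1, x2, x3⟩ hx
        simp only [AddMonoidHom.mem_ker, hφ, AddMonoidHom.mk'_apply, hf, Prod.mk.injEq] at hx
        obtain ⟨h2, h1⟩ :
            (x2 : ZMod 2) = 0 ∧ ((x1 + e * x3 + c * x2 : ℤ) : ZMod m) = 0 := by
          constructor <;> simp [Prod.ext_iff] at hx <;> push_cast <;> tauto
        obtain ⟨s, hs⟩ := (ZMod.intCast_zmod_eq_zero_iff_dvd _ _).1 h2
        obtain ⟨u, hu⟩ := (ZMod.intCast_zmod_eq_zero_iff_dvd _ _).1 h1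
        have hg1 : ((2 * n : ℤ), (0 : ℤ), (2 : ℤ)) ∈
            AddSubgroup.closure {((2 * n : ℤ), (0 : ℤ), (2 : ℤ)),
              ((0 : ℤ), (0 : ℤ), ((n : ℤ) - 1) ^ 2), ((0 : ℤ), (2 : ℤ), -((n : ℤ) + 1))} :=
          AddSubgroup.subset_closure (by simp)
        have hg2 : ((0 : ℤ), (0 : ℤ), ((n : ℤ) - 1) ^ 2) ∈
            AddSubgroup.closure {((2 * n : ℤ), (0 : ℤ), (2 : ℤ)),
              ((0 : ℤ), (0 : ℤ), ((n : ℤ) - 1) ^ 2), ((0 : ℤ), (2 : ℤ), -((n : ℤ) + 1))} :=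
          AddSubgroup.subset_closure (by simp)
        have hg3 : ((0 : ℤ), (2 : ℤ), -((n : ℤ) + 1)) ∈
            AddSubgroup.closure {((2 * n : ℤ), (0 : ℤ), (2 : ℤ)),
              ((0 : ℤ), (0 : ℤ), ((n : ℤ) - 1) ^ 2), ((0 : ℤ), (2 : ℤ), -((n : ℤ) + 1))} :=
          AddSubgroup.subset_closure (by simp)
        have key : (x1, x2, x3) =
            ((2*(k:ℤ) - 1)^2 * u - 2*(k:ℤ)*((k:ℤ)-1) * x3 - 2*(k:ℤ)*((k:ℤ)-1)*(2*(k:ℤ)+1) * s) •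
              ((2 * n : ℤ), (0 : ℤ), (2 : ℤ)) +
            (x3 + (2*(k:ℤ)+1) * s - 2 * u) • ((0 : ℤ), (0 : ℤ), ((n : ℤ) - 1) ^ 2) +
            s • ((0 : ℤ), (2 : ℤ), -((n : ℤ) + 1)) := by
          simp only [Prod.smul_mk, smul_eq_mul, Prod.mk_add_mk, Prod.mk.injEq]
          refine ⟨?_, ?_, ?_⟩
          · have : x1 = (m:ℤ) * u - e * x3 - c * x2 := by linarith [hu]
            rw [this, hmz, hnz, he, hc, hs]; ring
          · rw [hs]; ring
          · rw [hnz]; ring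
        rw [key]
        exact AddSubgroup.add_mem _ (AddSubgroup.add_mem _ (AddSubgroup.zsmul_mem _ hg1 _)
          (AddSubgroup.zsmul_mem _ hg2 _)) (AddSubgroup.zsmul_mem _ hg3 _)
    exact ⟨(QuotientAddGroup.quotientAddEquivOfEq hker).trans
      (QuotientAddGroup.quotientKerEquivOfSurjective φ hsurj)⟩
end

section
/- Let k ≥ 3, n ≥ 1. Let σ ∈ S_{2n+2} act on Z^{2n+1} as follows: writing x_1, ..., x_{2n+1} for the standard basis and setting x_{2n+2} = -(x_1 + ⋯ + x_{2n+1}), the action sends x_i to x_{σ(i)}. Let φ: Z^{2n+1} → Z/kZ be given by φ(γ) = Σ_{i=1}^{2n+1} (-1)^{i+1} γ_i mod k. If σ preserves parity (σ(q) ≡ q mod 2 for all q) or reverses parity (σ(q) ≢ q mod 2 for all q), then the induced automorphism of Z^{2n+1} maps ker(φ) onto ker(φ). -/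
/-- The homology classes `x_1, ..., x_{2n+2}` of loops around the punctures, as elements of
`ℤ^{2n+1} = H_1` (modeled by `Fin (2n+1) → ℤ`): for `i ≤ 2n+1` the class `x_i` is the `i`-th
standard basis vector, and `x_{2n+2} = -(x_1 + ⋯ + x_{2n+1})` (0-based indexing). -/
def basisX (n : ℕ) (i : Fin (2 * n + 2)) : Fin (2 * n + 1) → ℤ :=
  if h : (i : ℕ) < 2 * n + 1 then Pi.single (⟨i, h⟩ : Fin (2 * n + 1)) 1
  else -(∑ j : Fin (2 * n + 1), Pi.single j 1)

lemma basisX_castSucc (n : ℕ) (i : Fin (2 * n + 1)) :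
    basisX n (Fin.castSucc i) = Pi.single i 1 := by
  have h : ((Fin.castSucc i : Fin (2*n+2)) : ℕ) < 2 * n + 1 := i.isLt
  simp [basisX, h, i.isLt]

lemma sum_basisX (n : ℕ) : ∑ j : Fin (2 * n + 2), basisX n j = 0 := by
  rw [Fin.sum_univ_castSucc]
  have hlast : basisX n (Fin.last (2*n+1)) = -(∑ j : Fin (2 * n + 1), Pi.single j 1) := by
    simp [basisX, Fin.last]
  simp only [basisX_castSucc, hlast]
  ring

/-- explicit linear action of a permutation -/
def permT (n : ℕ) (τ : Equiv.Perm (Fin (2 * n + 2))) :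
    (Fin (2 * n + 1) → ℤ) →+ (Fin (2 * n + 1) → ℤ) where
  toFun γ := ∑ i : Fin (2 * n + 1), γ i • basisX n (τ (Fin.castSucc i))
  map_zero' := by simp
  map_add' x y := by
    simp [add_smul, Finset.sum_add_distrib]

lemma permT_single (n : ℕ) (τ : Equiv.Perm (Fin (2 * n + 2))) (j : Fin (2 * n + 1)) :
    permT n τ (Pi.single j 1) = basisX n (τ (Fin.castSucc j)) := by
  show ∑ i : Fin (2 * n + 1), (Pi.single j 1 : Fin (2*n+1) → ℤ) i • basisX n (τ (Fin.castSucc i))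
      = _
  rw [Finset.sum_eq_single j]
  · simp
  · intro b _ hb; simp [Pi.single_apply, hb]
  · simp

lemma permT_basisX (n : ℕ) (τ : Equiv.Perm (Fin (2 * n + 2))) (j : Fin (2 * n + 2)) :
    permT n τ (basisX n j) = basisX n (τ j) := by
  by_cases h : (j : ℕ) < 2 * n + 1
  · have hj : j = Fin.castSucc (⟨j, h⟩ : Fin (2*n+1)) := by ext; simp
    rw [hj, basisX_castSucc, permT_single]
  · have hj : j = Fin.last (2*n+1) := by
      ext; simp only [Fin.last]; omega
    have hb : basisX n j = -(∑ i : Fin (2 * n + 1), Pi.single i 1) := by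
      simp [basisX, h]
    rw [hb, map_neg, map_sum]
    simp only [permT_single]
    have h1 : ∑ i : Fin (2*n+2), basisX n (τ i) = 0 := by
      rw [Equiv.sum_comp]; exact sum_basisX n
    rw [Fin.sum_univ_castSucc] at h1
    rw [hj]
    exact (eq_neg_of_add_eq_zero_right h1).symm

lemma pi_decomp {m : ℕ} (γ : Fin m → ℤ) : γ = ∑ i, γ i • Pi.single i 1 := by
  ext j; simp [Finset.sum_apply, Pi.single_apply]

lemma hom_apply {m : ℕ} {X : Type*} [AddCommGroup X] (f : (Fin m → ℤ) →+ X) (γ : Fin m → ℤ) :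
    f γ = ∑ i, γ i • f (Pi.single i 1) := by
  conv_lhs => rw [pi_decomp γ]
  rw [map_sum]
  exact Finset.sum_congr rfl fun i _ => map_zsmul f (γ i) _

lemma neg_one_pow_parity {R : Type*} [Ring R] {a b : ℕ} (h : a % 2 = b % 2) :
    (-1 : R) ^ a = (-1) ^ b := by
  rw [neg_one_pow_eq_pow_mod_two (R := R) (n := a), h,
    ← neg_one_pow_eq_pow_mod_two (R := R)]

lemma neg_one_pow_parity' {R : Type*} [Ring R] {a b : ℕ} (h : a % 2 ≠ b % 2) :
    (-1 : R) ^ a = -(-1) ^ b := by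
  rw [neg_one_pow_eq_pow_mod_two (R := R) (n := a),
    neg_one_pow_eq_pow_mod_two (R := R) (n := b)]
  rcases Nat.mod_two_eq_zero_or_one a with h1 | h1 <;>
    rcases Nat.mod_two_eq_zero_or_one b with h2 | h2 <;>
      simp_all

section phi
variable {n k : ℕ} (φ : (Fin (2 * n + 1) → ℤ) →+ ZMod k)
  (hφ : ∀ γ : Fin (2 * n + 1) → ℤ,
      φ γ = ∑ i : Fin (2 * n + 1), (-1 : ZMod k) ^ (i : ℕ) * ((γ i : ℤ) : ZMod k))

include hφ

lemma phi_single (j : Fin (2 * n + 1)) : φ (Pi.single j 1) = (-1) ^ (j : ℕ) := by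
  rw [hφ]
  rw [Finset.sum_eq_single j]
  · simp
  · intro b _ hb; simp [Pi.single_apply, hb]
  · simp

lemma phi_basisX (j : Fin (2 * n + 2)) : φ (basisX n j) = (-1) ^ (j : ℕ) := by
  by_cases h : (j : ℕ) < 2 * n + 1
  · have hj : basisX n j = Pi.single (⟨j, h⟩ : Fin (2*n+1)) 1 := by simp [basisX, h]
    rw [hj, phi_single φ hφ]
  · have hj : (j : ℕ) = 2 * n + 1 := by omega
    have hb : basisX n j = -(∑ i : Fin (2 * n + 1), Pi.single i 1) := by simp [basisX, h]
    rw [hb, map_neg, map_sum]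
    have : ∀ i : Fin (2*n+1), φ (Pi.single i 1) = (-1:ZMod k)^(i:ℕ) := phi_single φ hφ
    simp only [this]
    rw [Fin.sum_univ_eq_sum_range (fun i => (-1:ZMod k)^i), neg_one_geom_sum]
    have : ¬ Even (2*n+1) := Nat.not_even_iff_odd.mpr ⟨n, rfl⟩
    rw [if_neg this, hj, Odd.neg_one_pow ⟨n, by ring⟩]

lemma phi_permT (τ : Equiv.Perm (Fin (2 * n + 2)))
    (hτ : (∀ q, ((τ q : ℕ) % 2 = (q : ℕ) % 2)) ∨ (∀ q, ((τ q : ℕ) % 2 ≠ (q : ℕ) % 2)))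
    (γ : Fin (2 * n + 1) → ℤ) : φ (permT n τ γ) = 0 ↔ φ γ = 0 := by
  have key : φ (permT n τ γ) = ∑ i : Fin (2*n+1),
      γ i • ((-1 : ZMod k) ^ ((τ (Fin.castSucc i) : ℕ))) := by
    have hc := hom_apply (φ.comp (permT n τ)) γ
    simp only [AddMonoidHom.comp_apply] at hc
    rw [hc]
    refine Finset.sum_congr rfl fun i _ => ?_
    rw [permT_single, phi_basisX φ hφ]
  have hγ : φ γ = ∑ i : Fin (2*n+1), γ i • ((-1 : ZMod k) ^ (i : ℕ)) := by
    rw [hφ]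
    refine Finset.sum_congr rfl fun i _ => ?_
    rw [zsmul_eq_mul, mul_comm]
  rcases hτ with hp | hp
  · have : φ (permT n τ γ) = φ γ := by
      rw [key, hγ]
      refine Finset.sum_congr rfl fun i _ => ?_
      rw [neg_one_pow_parity (hp (Fin.castSucc i))]; simp
    rw [this]
  · have : φ (permT n τ γ) = -φ γ := by
      rw [key, hγ, ← Finset.sum_neg_distrib]
      refine Finset.sum_congr rfl fun i _ => ?_
      rw [neg_one_pow_parity' (hp (Fin.castSucc i)), smul_neg]; simp
    rw [this, neg_eq_zero]

end phi

lemma permT_inv (n : ℕ) (τ : Equiv.Perm (Fin (2 * n + 2))) (γ : Fin (2 * n + 1) → ℤ) :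
    permT n τ (permT n τ⁻¹ γ) = γ := by
  have h := hom_apply ((permT n τ).comp (permT n τ⁻¹)) γ
  simp only [AddMonoidHom.comp_apply] at h
  rw [h]
  have hs : ∀ j : Fin (2*n+1), permT n τ (permT n τ⁻¹ (Pi.single j 1)) = Pi.single j 1 := by
    intro j
    rw [permT_single, permT_basisX, Equiv.Perm.coe_inv, Equiv.apply_symm_apply, basisX_castSucc]
  simp only [hs]
  exact (pi_decomp γ).symm

/-- Let `k ≥ 3`, `n ≥ 1`, and let `σ ∈ S_{2n+2}` act on `ℤ^{2n+1}` by sending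
`x_i` to `x_{σ(i)}` (where `x_1, ..., x_{2n+1}` is the standard basis and
`x_{2n+2} = -(x_1 + ⋯ + x_{2n+1})`); i.e. let `T` be the induced endomorphism of `ℤ^{2n+1}`.
Let `φ : ℤ^{2n+1} → ℤ/kℤ` be `φ(γ) = Σ (-1)^{i+1} γ_i mod k`.  If `σ` preserves parity
(`σ(q) ≡ q mod 2` for all `q`) or reverses parity (`σ(q) ≢ q mod 2` for all `q`), then
`T` maps `ker φ` onto `ker φ`. -/
theorem statement13 (n k : ℕ) (hn : 1 ≤ n) (hk : 3 ≤ k)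
    (σ : Equiv.Perm (Fin (2 * n + 2)))
    (hσ : (∀ q, ((σ q : ℕ) % 2 = (q : ℕ) % 2)) ∨ (∀ q, ((σ q : ℕ) % 2 ≠ (q : ℕ) % 2)))
    (φ : (Fin (2 * n + 1) → ℤ) →+ ZMod k)
    (hφ : ∀ γ : Fin (2 * n + 1) → ℤ,
      φ γ = ∑ i : Fin (2 * n + 1), (-1 : ZMod k) ^ (i : ℕ) * ((γ i : ℤ) : ZMod k))
    (T : (Fin (2 * n + 1) → ℤ) →+ (Fin (2 * n + 1) → ℤ))
    (hT : ∀ i : Fin (2 * n + 2), T (basisX n i) = basisX n (σ i)) :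
    (φ.ker).map T = φ.ker := by
  -- T coincides with permT n σ
  have hTeq : ∀ γ, T γ = permT n σ γ := by
    intro γ
    rw [hom_apply T γ, hom_apply (permT n σ) γ]
    refine Finset.sum_congr rfl fun i _ => ?_
    rw [← basisX_castSucc n i, hT, permT_basisX]
  have hinv : (∀ q, ((σ⁻¹ q : ℕ) % 2 = (q : ℕ) % 2)) ∨
      (∀ q, ((σ⁻¹ q : ℕ) % 2 ≠ (q : ℕ) % 2)) := by
    rcases hσ with hp | hp
    · left; intro q
      have := hp (σ⁻¹ q)
      rw [Equiv.Perm.coe_inv, Equiv.apply_symm_apply] at this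
      exact this.symm
    · right; intro q
      have := hp (σ⁻¹ q)
      rw [Equiv.Perm.coe_inv, Equiv.apply_symm_apply] at this
      exact fun h => this h.symm
  ext x
  simp only [AddSubgroup.mem_map, AddMonoidHom.mem_ker]
  constructor
  · rintro ⟨γ, hγ, rfl⟩
    rw [hTeq]
    exact (phi_permT φ hφ σ hσ γ).mpr hγ
  · intro hx
    refine ⟨permT n σ⁻¹ x, ?_, ?_⟩
    · exact (phi_permT φ hφ σ⁻¹ hinv x).mpr hx
    · rw [hTeq]
      exact permT_inv n σ x
end

section
/- Let k ≥ 3, n ≥ 1, and let σ ∈ S_{2n+2} be a permutation that is neither parity-preserving nor parity-reversing. With the action of σ on Z^{2n+1} and the homomorphism φ: Z^{2n+1} → Z/kZ defined as follows (standard basis x_1,...,x_{2n+1}, x_{2n+2} := -(x_1+⋯+x_{2n+1}), σ sends x_i to x_{σ(i)}, and φ(γ) = Σ(-1)^{i+1}γ_i mod k), the induced automorphism of Z^{2n+1} does not preserve ker(φ): there exists γ ∈ ker(φ) whose image under σ is not in ker(φ). -/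
lemma phi_basis (n k : ℕ) (φ : (Fin (2 * n + 1) → ℤ) →+ ZMod k)
    (hφ : ∀ γ : Fin (2 * n + 1) → ℤ,
      φ γ = ∑ i : Fin (2 * n + 1), (-1 : ZMod k) ^ (i : ℕ) * ((γ i : ℤ) : ZMod k))
    (i : Fin (2 * n + 2)) :
    φ (basisX n i) = (-1 : ZMod k) ^ (i : ℕ) := by
  rw [hφ]
  unfold basisX
  split
  case isTrue h =>
    rw [Finset.sum_eq_single (⟨i, h⟩ : Fin (2 * n + 1))]
    · simp
    · intro b _ hb
      simp [Pi.single_apply, hb]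
    · simp
  case isFalse h =>
    have hi : (i : ℕ) = 2 * n + 1 := by omega
    have step : (∑ x : Fin (2*n+1), (-1:ZMod k)^(x:ℕ) *
        (((-(∑ j : Fin (2 * n + 1), Pi.single j (1:ℤ))) x : ℤ) : ZMod k))
        = ∑ x : Fin (2*n+1), -((-1:ZMod k)^(x:ℕ)) := by
      refine Finset.sum_congr rfl fun x _ => ?_
      simp [Finset.sum_apply, Pi.single_apply]
    rw [step, Finset.sum_neg_distrib,
      Fin.sum_univ_eq_sum_range (fun j => (-1:ZMod k)^j), neg_one_geom_sum,
      if_neg (by simp [Nat.even_add_one, Nat.even_iff]), hi,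
      Odd.neg_one_pow ⟨n, by ring⟩]

lemma neg_one_pow_congr_mod {R : Type*} [Ring R] {m l : ℕ} (h : m % 2 = l % 2) :
    (-1 : R) ^ m = (-1 : R) ^ l := by
  rw [neg_one_pow_eq_pow_mod_two, h, ← neg_one_pow_eq_pow_mod_two]

lemma neg_one_pow_ne {R : Type*} [Ring R] {m l : ℕ} (h : m % 2 ≠ l % 2) :
    (-1 : R) ^ m = -(-1 : R) ^ l := by
  rw [neg_one_pow_eq_pow_mod_two m, neg_one_pow_eq_pow_mod_two l]
  rcases Nat.mod_two_eq_zero_or_one m with hm | hm <;>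
    rcases Nat.mod_two_eq_zero_or_one l with hl | hl <;>
      simp_all


/-- Let `k ≥ 3`, `n ≥ 1`, and let `σ ∈ S_{2n+2}` be neither parity-preserving
nor parity-reversing.  With the action of `σ` on `ℤ^{2n+1}` (sending `x_i` to `x_{σ(i)}`,
where `x_{2n+2} = -(x_1 + ⋯ + x_{2n+1})`) given by the endomorphism `T`, and
`φ(γ) = Σ (-1)^{i+1} γ_i mod k`, the map `T` does not preserve `ker φ`: there exists
`γ ∈ ker φ` with `T γ ∉ ker φ`. -/
theorem statement14 (n k : ℕ) (hn : 1 ≤ n) (hk : 3 ≤ k)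
    (σ : Equiv.Perm (Fin (2 * n + 2)))
    (hσ1 : ¬ (∀ q, ((σ q : ℕ) % 2 = (q : ℕ) % 2)))
    (hσ2 : ¬ (∀ q, ((σ q : ℕ) % 2 ≠ (q : ℕ) % 2)))
    (φ : (Fin (2 * n + 1) → ℤ) →+ ZMod k)
    (hφ : ∀ γ : Fin (2 * n + 1) → ℤ,
      φ γ = ∑ i : Fin (2 * n + 1), (-1 : ZMod k) ^ (i : ℕ) * ((γ i : ℤ) : ZMod k))
    (T : (Fin (2 * n + 1) → ℤ) →+ (Fin (2 * n + 1) → ℤ))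
    (hT : ∀ i : Fin (2 * n + 2), T (basisX n i) = basisX n (σ i)) :
    ∃ γ : Fin (2 * n + 1) → ℤ, φ γ = 0 ∧ φ (T γ) ≠ 0 := by
  push_neg at hσ1 hσ2
  obtain ⟨b, hb⟩ := hσ1
  obtain ⟨a, ha⟩ := hσ2
  have h2 : (2 : ZMod k) ≠ 0 := by
    haveI : NeZero k := ⟨by omega⟩
    intro h
    rw [show (2 : ZMod k) = ((2 : ℕ) : ZMod k) by norm_cast,
      ZMod.natCast_eq_zero_iff] at h
    exact absurd (Nat.le_of_dvd (by norm_num) h) (by omega)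
  have hss : (-1 : ZMod k) ^ (a : ℕ) * (-1) ^ (a : ℕ) = 1 := by
    rw [← pow_add, neg_one_pow_eq_pow_mod_two]
    simp [← two_mul, Nat.mul_mod_right]
  have h2s : (2 : ZMod k) * (-1) ^ (a : ℕ) ≠ 0 := by
    intro h
    apply h2
    calc (2 : ZMod k) = 2 * ((-1) ^ (a:ℕ) * (-1) ^ (a:ℕ)) := by rw [hss, mul_one]
    _ = (2 * (-1) ^ (a:ℕ)) * (-1) ^ (a:ℕ) := by ring
    _ = 0 := by rw [h, zero_mul]
  have hσa : (-1 : ZMod k) ^ ((σ a : ℕ)) = (-1) ^ (a : ℕ) := neg_one_pow_congr_mod ha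
  have hσb : (-1 : ZMod k) ^ ((σ b : ℕ)) = -(-1 : ZMod k) ^ (b : ℕ) := neg_one_pow_ne hb
  by_cases hab : (a : ℕ) % 2 = (b : ℕ) % 2
  · refine ⟨basisX n a - basisX n b, ?_, ?_⟩
    · rw [map_sub, phi_basis n k φ hφ, phi_basis n k φ hφ,
        neg_one_pow_congr_mod hab, sub_self]
    · rw [map_sub, hT, hT, map_sub, phi_basis n k φ hφ, phi_basis n k φ hφ,
        hσa, hσb, ← neg_one_pow_congr_mod hab, sub_neg_eq_add, ← two_mul]
      exact h2s
  · refine ⟨basisX n a + basisX n b, ?_, ?_⟩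
    · rw [map_add, phi_basis n k φ hφ, phi_basis n k φ hφ,
        neg_one_pow_ne hab, neg_add_cancel]
    · rw [map_add, hT, hT, map_add, phi_basis n k φ hφ, phi_basis n k φ hφ,
        hσa, hσb, ← neg_one_pow_ne hab, ← two_mul]
      exact h2s
end

section
/- Let n ≥ 1 and k ≥ 3. Consider the subgroup W_{2n+2} ≤ S_{2n+2} of parity-preserving or parity-reversing permutations, and the transpositions x_i = (2i-1, 2i+1) and y_i = (2i, 2i+2) for 1 ≤ i ≤ n, together with z = (1 2)(3 4)⋯(2n+1 2n+2). Then {x_1, ..., x_n, y_1, ..., y_n, z} generates W_{2n+2}. -/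
/-- The set `W_{2n+2}` of permutations of `{1, ..., 2n+2}` (modeled by `Fin (2n+2)`,
0-based) that either preserve parity (`σ(q) ≡ q (mod 2)` for all `q`) or reverse parity
(`σ(q) ≢ q (mod 2)` for all `q`). -/
def Wset (n : ℕ) : Set (Equiv.Perm (Fin (2 * n + 2))) :=
  {f | (∀ q, ((f q : ℕ) % 2 = (q : ℕ) % 2)) ∨ (∀ q, ((f q : ℕ) % 2 ≠ (q : ℕ) % 2))}

/-- The transposition `x_i = (2i-1, 2i+1)` (1-based), for `i = 1, ..., n`;
with `i : Fin n` the 0-based form is `(2i, 2i+2)`. -/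
def xGen (n : ℕ) (i : Fin n) : Equiv.Perm (Fin (2 * n + 2)) :=
  Equiv.swap ⟨2 * (i : ℕ), by have := i.isLt; omega⟩ ⟨2 * (i : ℕ) + 2, by have := i.isLt; omega⟩

/-- The transposition `y_i = (2i, 2i+2)` (1-based), for `i = 1, ..., n`;
with `i : Fin n` the 0-based form is `(2i+1, 2i+3)`. -/
def yGen (n : ℕ) (i : Fin n) : Equiv.Perm (Fin (2 * n + 2)) :=
  Equiv.swap ⟨2 * (i : ℕ) + 1, by have := i.isLt; omega⟩
    ⟨2 * (i : ℕ) + 3, by have := i.isLt; omega⟩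

/-- The parity-reversing involution `z = (1 2)(3 4)⋯(2n+1 2n+2)` (1-based). -/
def zGen (n : ℕ) : Equiv.Perm (Fin (2 * n + 2)) :=
  ((List.finRange (n + 1)).map (fun j : Fin (n + 1) => Equiv.swap
    (⟨2 * (j : ℕ), by have := j.isLt; omega⟩ : Fin (2 * n + 2))
    ⟨2 * (j : ℕ) + 1, by have := j.isLt; omega⟩)).prod

section Aux

open Equiv MulAction Subgroup

variable (n : ℕ)

/-- The swap used in `zGen`. -/
def zSwap (j : Fin (n + 1)) : Equiv.Perm (Fin (2 * n + 2)) :=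
  Equiv.swap (⟨2 * (j : ℕ), by have := j.isLt; omega⟩ : Fin (2 * n + 2))
    ⟨2 * (j : ℕ) + 1, by have := j.isLt; omega⟩

lemma prod_fix (l : List (Fin (n + 1))) (q : Fin (2 * n + 2))
    (h : ∀ j ∈ l, (j : ℕ) ≠ (q : ℕ) / 2) :
    ((l.map (zSwap n)).prod) q = q := by
  induction l with
  | nil => simp
  | cons s t ih =>
    simp only [List.map_cons, List.prod_cons, Equiv.Perm.mul_apply]
    rw [ih (fun j hj => h j (List.mem_cons_of_mem s hj))]
    have hs := h s List.mem_cons_self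
    apply Equiv.swap_apply_of_ne_of_ne <;>
      · intro hc
        apply hs
        have := congrArg Fin.val hc
        simp at this
        omega

lemma prod_flip (l : List (Fin (n + 1))) (hl : l.Nodup) (q : Fin (2 * n + 2))
    (j : Fin (n + 1)) (hj : j ∈ l) (hjq : (j : ℕ) = (q : ℕ) / 2) :
    (((l.map (zSwap n)).prod) q : ℕ) = 2 * ((q : ℕ) / 2) + (1 - (q : ℕ) % 2) := by
  induction l with
  | nil => simp at hj
  | cons s t ih =>
    simp only [List.map_cons, List.prod_cons, Equiv.Perm.mul_apply]
    rw [List.nodup_cons] at hl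
    rcases List.mem_cons.mp hj with rfl | hjt
    · -- j = s : the tail fixes q, then zSwap j flips it
      rw [prod_fix n t q (fun i hi hc => by
        have : i = j := Fin.ext (by omega)
        exact hl.1 (this ▸ hi))]
      have hq2 : (q : ℕ) % 2 = 0 ∨ (q : ℕ) % 2 = 1 := Nat.mod_two_eq_zero_or_one _
      rcases hq2 with h2 | h2
      · have hq : q = (⟨2 * (j : ℕ), by have := j.isLt; omega⟩ : Fin (2 * n + 2)) :=
          Fin.ext (by simp only [Fin.val_mk]; omega)
        rw [hq, zSwap, Equiv.swap_apply_left]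
        simp only [Fin.val_mk]
        omega
      · have hq : q = (⟨2 * (j : ℕ) + 1, by have := j.isLt; omega⟩ : Fin (2 * n + 2)) :=
          Fin.ext (by simp only [Fin.val_mk]; omega)
        rw [hq, zSwap, Equiv.swap_apply_right]
        simp only [Fin.val_mk]
        omega
    · -- j ∈ t : tail flips q, head fixes the flipped value
      have key := ih hl.2 hjt
      have hsj : (s : ℕ) ≠ (q : ℕ) / 2 := by
        intro hc
        exact hl.1 (show s ∈ t from (Fin.ext (hc.trans hjq.symm) : s = j) ▸ hjt)
      have hmod : (q : ℕ) % 2 < 2 := Nat.mod_lt _ (by omega)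
      rw [zSwap, Equiv.swap_apply_of_ne_of_ne]
      · exact key
      · intro hc
        have := congrArg Fin.val hc
        rw [key] at this
        simp at this
        omega
      · intro hc
        have := congrArg Fin.val hc
        rw [key] at this
        simp at this
        omega

lemma zGen_apply (q : Fin (2 * n + 2)) :
    ((zGen n) q : ℕ) = 2 * ((q : ℕ) / 2) + (1 - (q : ℕ) % 2) := by
  have hlt : (q : ℕ) / 2 < n + 1 := by have := q.isLt; omega
  exact prod_flip n (List.finRange (n + 1)) (List.nodup_finRange _) q
    ⟨(q : ℕ) / 2, hlt⟩ (List.mem_finRange _) rfl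

lemma orbit_even (C : Subgroup (Equiv.Perm (Fin (2 * n + 2))))
    (hC : ∀ i : Fin n, xGen n i ∈ C) (j : ℕ) (hj : j ≤ n) :
    (⟨2 * j, by omega⟩ : Fin (2 * n + 2)) ∈ MulAction.orbit C (⟨0, by omega⟩ : Fin (2 * n + 2)) := by
  induction j with
  | zero => exact MulAction.mem_orbit_self _
  | succ m ih =>
    have hm : m ≤ n := by omega
    have ihm := ih hm
    have hmem : (⟨2 * (m + 1), by omega⟩ : Fin (2 * n + 2)) ∈
        MulAction.orbit C (⟨2 * m, by omega⟩ : Fin (2 * n + 2)) := by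
      refine MulAction.mem_orbit_iff.mpr ⟨⟨xGen n ⟨m, by omega⟩, hC _⟩, ?_⟩
      show (xGen n ⟨m, by omega⟩) (⟨2 * m, by omega⟩ : Fin (2 * n + 2)) = _
      rw [xGen, Equiv.swap_apply_left]
      exact Fin.ext (by simp; omega)
    rw [MulAction.orbit_eq_iff.mpr ihm] at hmem
    exact hmem

lemma orbit_odd (C : Subgroup (Equiv.Perm (Fin (2 * n + 2))))
    (hC : ∀ i : Fin n, yGen n i ∈ C) (j : ℕ) (hj : j ≤ n) :
    (⟨2 * j + 1, by omega⟩ : Fin (2 * n + 2)) ∈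
      MulAction.orbit C (⟨1, by omega⟩ : Fin (2 * n + 2)) := by
  induction j with
  | zero => exact MulAction.mem_orbit_self _
  | succ m ih =>
    have hm : m ≤ n := by omega
    have ihm := ih hm
    have hmem : (⟨2 * (m + 1) + 1, by omega⟩ : Fin (2 * n + 2)) ∈
        MulAction.orbit C (⟨2 * m + 1, by omega⟩ : Fin (2 * n + 2)) := by
      refine MulAction.mem_orbit_iff.mpr ⟨⟨yGen n ⟨m, by omega⟩, hC _⟩, ?_⟩
      show (yGen n ⟨m, by omega⟩) (⟨2 * m + 1, by omega⟩ : Fin (2 * n + 2)) = _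
      rw [yGen, Equiv.swap_apply_left]
      exact Fin.ext (by simp; omega)
    rw [MulAction.orbit_eq_iff.mpr ihm] at hmem
    exact hmem

lemma orbit_same_parity (C : Subgroup (Equiv.Perm (Fin (2 * n + 2))))
    (hCx : ∀ i : Fin n, xGen n i ∈ C) (hCy : ∀ i : Fin n, yGen n i ∈ C)
    (p q : Fin (2 * n + 2)) (h : (p : ℕ) % 2 = (q : ℕ) % 2) :
    p ∈ MulAction.orbit C q := by
  have hp := p.isLt
  have hq := q.isLt
  rcases Nat.mod_two_eq_zero_or_one (q : ℕ) with h2 | h2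
  · have hpe : p = (⟨2 * ((p : ℕ) / 2), by omega⟩ : Fin (2 * n + 2)) := Fin.ext (by simp only [Fin.val_mk]; omega)
    have hqe : q = (⟨2 * ((q : ℕ) / 2), by omega⟩ : Fin (2 * n + 2)) := Fin.ext (by simp only [Fin.val_mk]; omega)
    have h1 := orbit_even n C hCx ((p : ℕ) / 2) (by omega)
    have h2' := orbit_even n C hCx ((q : ℕ) / 2) (by omega)
    rw [← hpe] at h1
    rw [← hqe] at h2'
    rw [← MulAction.orbit_eq_iff.mpr h2'] at h1
    exact h1
  · have hpe : p = (⟨2 * ((p : ℕ) / 2) + 1, by omega⟩ : Fin (2 * n + 2)) := Fin.ext (by simp only [Fin.val_mk]; omega)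
    have hqe : q = (⟨2 * ((q : ℕ) / 2) + 1, by omega⟩ : Fin (2 * n + 2)) := Fin.ext (by simp only [Fin.val_mk]; omega)
    have h1 := orbit_odd n C hCy ((p : ℕ) / 2) (by omega)
    have h2' := orbit_odd n C hCy ((q : ℕ) / 2) (by omega)
    rw [← hpe] at h1
    rw [← hqe] at h2'
    rw [← MulAction.orbit_eq_iff.mpr h2'] at h1
    exact h1

end Aux

/-- For `n ≥ 1` and `k ≥ 3`, the subgroup `W_{2n+2} ≤ S_{2n+2}` of
parity-preserving or parity-reversing permutations is generated by the transpositions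
`x_i = (2i-1, 2i+1)`, `y_i = (2i, 2i+2)` (`1 ≤ i ≤ n`) together with
`z = (1 2)(3 4)⋯(2n+1 2n+2)`. -/
theorem statement19 (n k : ℕ) (hn : 1 ≤ n) (hk : 3 ≤ k)
    (H : Subgroup (Equiv.Perm (Fin (2 * n + 2))))
    (hH : (H : Set (Equiv.Perm (Fin (2 * n + 2)))) = Wset n) :
    Subgroup.closure (Set.range (xGen n) ∪ Set.range (yGen n) ∪ {zGen n}) = H := by
  have hmemH : ∀ f : Equiv.Perm (Fin (2 * n + 2)), f ∈ H ↔ f ∈ Wset n := by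
    intro f
    rw [← SetLike.mem_coe, hH]
  set S' : Set (Equiv.Perm (Fin (2 * n + 2))) := Set.range (xGen n) ∪ Set.range (yGen n) with hS'
  have hS'swap : ∀ f ∈ S', f.IsSwap := by
    rintro f (⟨i, rfl⟩ | ⟨i, rfl⟩)
    · exact ⟨_, _, Fin.ne_of_val_ne (by simp), rfl⟩
    · exact ⟨_, _, Fin.ne_of_val_ne (by simp), rfl⟩
  -- every parity-preserving permutation is in the closure of S'
  have hpres : ∀ f : Equiv.Perm (Fin (2 * n + 2)),
      (∀ q, ((f q : ℕ) % 2 = (q : ℕ) % 2)) → f ∈ Subgroup.closure S' := by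
    intro f hf
    rw [mem_closure_isSwap hS'swap]
    refine ⟨Set.toFinite _, fun x => ?_⟩
    exact orbit_same_parity n _ (fun i => Subgroup.subset_closure (Or.inl ⟨i, rfl⟩))
      (fun i => Subgroup.subset_closure (Or.inr ⟨i, rfl⟩)) (f x) x (hf x)
  apply le_antisymm
  · -- closure ≤ H
    rw [Subgroup.closure_le]
    rintro f (hf | hf)
    · rcases hf with ⟨i, rfl⟩ | ⟨i, rfl⟩
      · rw [SetLike.mem_coe, hmemH]
        left
        intro q
        rw [xGen, Equiv.swap_apply_def]
        split_ifs with h1 h2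
        · rw [h1]; simp only [Fin.val_mk]; omega
        · rw [h2]; simp only [Fin.val_mk]; omega
        · rfl
      · rw [SetLike.mem_coe, hmemH]
        left
        intro q
        rw [yGen, Equiv.swap_apply_def]
        split_ifs with h1 h2
        · rw [h1]; simp only [Fin.val_mk]; omega
        · rw [h2]; simp only [Fin.val_mk]; omega
        · rfl
    · rcases hf with rfl
      rw [SetLike.mem_coe, hmemH]
      right
      intro q
      rw [zGen_apply]
      omega
  · -- H ≤ closure
    intro f hf
    rw [hmemH] at hf
    have hz : zGen n ∈ Subgroup.closure (S' ∪ {zGen n}) :=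
      Subgroup.subset_closure (Or.inr rfl)
    have hsub : Subgroup.closure S' ≤ Subgroup.closure (S' ∪ {zGen n}) :=
      Subgroup.closure_mono (Set.subset_union_left)
    rcases hf with hf | hf
    · exact hsub (hpres f hf)
    · -- parity reversing : f * zGen is parity preserving
      have hfz : f * zGen n ∈ Subgroup.closure S' := by
        apply hpres
        intro q
        have h1 := zGen_apply n q
        have h2 := hf ((zGen n) q)
        have h3 := Nat.mod_two_eq_zero_or_one (q : ℕ)
        have h4 := Nat.mod_two_eq_zero_or_one ((f ((zGen n) q) : Fin (2 * n + 2)) : ℕ)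
        simp only [Equiv.Perm.mul_apply]
        omega
      have : f = (f * zGen n) * (zGen n)⁻¹ := by group
      rw [this]
      exact Subgroup.mul_mem _ (hsub hfz) (Subgroup.inv_mem _ hz)
end
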